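/- Let G be a K_{1,4}-free split graph with partition (K, I), K a maximum clique, and let v ∈ K with |N(v) ∩ I| = 3. Then in the split graph H = G − (N(v) ∩ I), every vertex of K has at most 2 neighbors in the remaining independent set, i.e., Δ^I_H ≤ 2. -/
import Mathlib


open SimpleGraph

variable {V : Type*}

/-- `I` is an independent set in `G`. -/
def IndepOn (G : SimpleGraph V) (I : Set V) : Prop :=
  ∀ ⦃u⦄, u ∈ I → ∀ ⦃v⦄, v ∈ I → ¬ G.Adj u v

/-- `(K, I)` is a split partition of `G`: `K` a clique, `I` independent,
partitioning the vertex set. -/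
def SplitPartition (G : SimpleGraph V) (K I : Set V) : Prop :=
  Disjoint K I ∧ K ∪ I = Set.univ ∧ G.IsClique K ∧ IndepOn G I

/-- `K` is a maximum clique of `G`. -/
def MaxClique (G : SimpleGraph V) (K : Set V) : Prop :=
  G.IsClique K ∧ ∀ K' : Set V, G.IsClique K' → K'.ncard ≤ K.ncard

/-- `G` has no induced copy of the star `K_{1,n}` (center plus `n` pairwise
nonadjacent leaves). -/
def StarFree (G : SimpleGraph V) (n : ℕ) : Prop :=
  ¬ ∃ (c : V) (L : Finset V), L.card = n ∧ c ∉ L ∧ (∀ l ∈ L, G.Adj c l) ∧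
      (∀ l ∈ L, ∀ m ∈ L, l ≠ m → ¬ G.Adj l m)

/-- If `v ∈ K` has exactly 3 neighbors in `I` in a `K_{1,4}`-free split graph,
then in `H = G - (N(v) ∩ I)` every vertex of `K` has at most 2 neighbors in the
remaining independent set. -/
theorem k14free_claimB [Fintype V] (G : SimpleGraph V) (K I : Set V)
    (hsplit : SplitPartition G K I) (hmax : MaxClique G K)
    (hfree : StarFree G 4) (v : V) (hv : v ∈ K)
    (hdeg : (G.neighborSet v ∩ I).ncard = 3) :
    ∀ w ∈ K, (G.neighborSet w ∩ (I \ G.neighborSet v)).ncard ≤ 2 := by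
  classical
  obtain ⟨hdisj, -, hclique, hindep⟩ := hsplit
  intro w hw
  by_contra h
  push_neg at h
  -- w ≠ v since otherwise the set is empty
  have hwv : w ≠ v := by
    rintro rfl
    have : G.neighborSet w ∩ (I \ G.neighborSet w) = ∅ := by
      ext x; simp (config := {contextual := true}) [Set.mem_inter_iff]
    rw [this] at h
    simp at h
  set S := G.neighborSet w ∩ (I \ G.neighborSet v) with hS
  have hfin : S.Finite := Set.toFinite _
  have hcard : 3 ≤ hfin.toFinset.card := by
    rw [← Set.ncard_eq_toFinset_card S hfin]
    omega
  obtain ⟨t, hts, htcard⟩ := Finset.exists_subset_card_eq hcard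
  have hmemS : ∀ x ∈ t, x ∈ S := by
    intro x hx
    have := hts hx
    simpa using this
  have hvI : v ∉ I := fun h' => hdisj.ne_of_mem hv h' rfl
  have hwI : w ∉ I := fun h' => hdisj.ne_of_mem hw h' rfl
  have hvt : v ∉ t := fun h' => hvI (hmemS v h').2.1
  apply hfree
  refine ⟨w, insert v t, ?_, ?_, ?_, ?_⟩
  · rw [Finset.card_insert_of_notMem hvt, htcard]
  · intro hmem
    rcases Finset.mem_insert.mp hmem with h1 | h1
    · exact hwv h1
    · exact hwI (hmemS w h1).2.1
  · intro l hl
    rcases Finset.mem_insert.mp hl with h1 | h1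
    · subst h1; exact hclique hw hv hwv
    · exact (hmemS l h1).1
  · intro l hl m hm hlm
    rcases Finset.mem_insert.mp hl with h1 | h1 <;>
      rcases Finset.mem_insert.mp hm with h2 | h2
    · subst h1; subst h2; exact absurd rfl hlm
    · subst h1
      exact (hmemS m h2).2.2
    · subst h2
      intro hadj
      exact (hmemS l h1).2.2 hadj.symm
    · exact hindep (hmemS l h1).2.1 (hmemS m h2).2.1
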